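/- The opposite of the wide subcategory Δ^act of the simplex category consisting of active morphisms (endpoint-preserving maps: f(0) = 0 and f(n) = m for f : [n] → [m]) is equivalent to the augmented simplex category Δ_a (finite, possibly empty, linear orders and monotone maps). An equivalence is given on objects by [n] ↦ the linear order with n elements, sending the coface map δⁿ_i : [n-1] → [n] (0 < i < n) to the codegeneracy σ^{n-2}_{i-1} and the codegeneracy σⁿ_i : [n+1] → [n] to the coface δⁿ_i. -/

import Mathlib

open CategoryTheory

/-- An object of the wide subcategory `Δ^act` of the simplex category on active
(endpoint-preserving) morphisms: `⟨n⟩` represents `[n]`. -/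
structure ActiveObj where
  n : ℕ

/-- The wide subcategory `Δ^act` of the simplex category whose morphisms are the
active (endpoint-preserving) monotone maps. -/
instance : Category ActiveObj where
  Hom x y := {f : Fin (x.n + 1) →o Fin (y.n + 1) // f 0 = 0 ∧ f (Fin.last x.n) = Fin.last y.n}
  id x := ⟨OrderHom.id, rfl, rfl⟩
  comp {x y z} f g := ⟨g.1.comp f.1, by
    constructor
    · show g.1 (f.1 0) = 0
      rw [f.2.1, g.2.1]
    · show g.1 (f.1 (Fin.last x.n)) = Fin.last z.n
      rw [f.2.2, g.2.2]⟩
  id_comp f := Subtype.ext rfl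
  comp_id f := Subtype.ext rfl
  assoc f g h := Subtype.ext rfl

/-- An object of the augmented simplex category `Δ_a`: `⟨n⟩` is the linear order with
`n` elements (possibly empty). -/
structure AugObj where
  n : ℕ

/-- The augmented simplex category `Δ_a` of finite (possibly empty) linear orders and
monotone maps. -/
instance : Category AugObj where
  Hom x y := Fin x.n →o Fin y.n
  id x := OrderHom.id
  comp f g := g.comp f

/-- The underlying monotone map of the codegeneracy `σⁿ_i : [n+1] → [n]`. -/
def σmapAct (n : ℕ) (i : Fin (n + 1)) : Fin (n + 2) →o Fin (n + 1) where
  toFun j := ⟨if (j : ℕ) ≤ (i : ℕ) then (j : ℕ) else (j : ℕ) - 1, by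
    have hj := j.isLt; have hi := i.isLt; split <;> omega⟩
  monotone' := by
    intro a b hab
    have hab' : (a : ℕ) ≤ (b : ℕ) := hab
    simp only [Fin.mk_le_mk]
    split_ifs <;> omega

/-- The codegeneracy `σⁿ_i : [n+1] → [n]` (hitting `i` twice), as an active morphism. -/
def σact (n : ℕ) (i : Fin (n + 1)) : (ActiveObj.mk (n + 1)) ⟶ (ActiveObj.mk n) :=
  ⟨σmapAct n i, by
    constructor
    · apply Fin.ext
      show (if (0 : ℕ) ≤ (i : ℕ) then (0 : ℕ) else 0 - 1) = ((0 : Fin (n + 1)) : ℕ)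
      simp
    · apply Fin.ext
      have hi := i.isLt
      show (if n + 1 ≤ (i : ℕ) then n + 1 else n + 1 - 1) = ((Fin.last n : Fin (n + 1)) : ℕ)
      rw [if_neg (by omega)]
      simp⟩

/-- The underlying monotone map of the coface `δ : [m] → [m+1]` skipping `i`. -/
def δmapAct (m : ℕ) (i : ℕ) : Fin (m + 1) →o Fin (m + 2) where
  toFun j := ⟨if (j : ℕ) < i then (j : ℕ) else (j : ℕ) + 1, by
    have hj := j.isLt; split <;> omega⟩
  monotone' := by
    intro a b hab
    have hab' : (a : ℕ) ≤ (b : ℕ) := hab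
    simp only [Fin.mk_le_mk]
    split_ifs <;> omega

/-- The coface `δⁿ_i : [n-1] → [n]` for an interior `0 < i < n` (here `[m] → [m+1]`
skipping the value `i` with `1 ≤ i ≤ m`), as an active morphism. -/
def δact (m : ℕ) (i : ℕ) (h1 : 1 ≤ i) (h2 : i ≤ m) :
    (ActiveObj.mk m) ⟶ (ActiveObj.mk (m + 1)) :=
  ⟨δmapAct m i, by
    constructor
    · apply Fin.ext
      show (if (0 : ℕ) < i then (0 : ℕ) else 0 + 1) = ((0 : Fin (m + 2)) : ℕ)
      rw [if_pos (by omega)]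
      simp
    · apply Fin.ext
      show (if m < i then m else m + 1) = ((Fin.last (m + 1) : Fin (m + 2)) : ℕ)
      rw [if_neg (by omega)]
      simp⟩

/-- The coface map `δ_i` in the augmented simplex category (the monotone injection
skipping `i`). -/
def δa (n : ℕ) (i : Fin (n + 1)) : (AugObj.mk n) ⟶ (AugObj.mk (n + 1)) :=
  (Fin.succAboveOrderEmb i).toOrderHom

/-- The codegeneracy map `σ_k` in the augmented simplex category (the monotone
surjection hitting `k` twice). -/
def σaMap (m : ℕ) (k : ℕ) (_hk : k < m) : Fin (m + 1) →o Fin m where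
  toFun j := ⟨if (j : ℕ) ≤ k then (j : ℕ) else (j : ℕ) - 1, by
    have hj := j.isLt; split <;> omega⟩
  monotone' := by
    intro a b hab
    have hab' : (a : ℕ) ≤ (b : ℕ) := hab
    simp only [Fin.mk_le_mk]
    split_ifs <;> omega

/-- The codegeneracy map `σ_k` in the augmented simplex category, as a morphism. -/
def σa (m : ℕ) (k : ℕ) (hk : k < m) : (AugObj.mk (m + 1)) ⟶ (AugObj.mk m) :=
  σaMap m k hk

namespace ActiveAug

/-- Extension of a monotone map on `Fin (m+1)` to `ℕ`. -/
def fext {m n : ℕ} (f : Fin (m + 1) →o Fin (n + 1)) (k : ℕ) : ℕ :=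
  (f ⟨min k m, by omega⟩ : ℕ)

lemma fext_mono {m n : ℕ} (f : Fin (m + 1) →o Fin (n + 1)) : Monotone (fext f) := by
  intro a b hab
  exact f.monotone (Fin.mk_le_mk.mpr (by omega))

lemma fext_eq {m n : ℕ} (f : Fin (m + 1) →o Fin (n + 1)) {k : ℕ} (hk : k ≤ m) :
    fext f k = (f ⟨k, by omega⟩ : ℕ) := by
  simp [fext, Nat.min_eq_left hk]

/-- The "dual" value: the largest `k ≤ m` with `f k ≤ j`. -/
def dnat {m n : ℕ} (f : Fin (m + 1) →o Fin (n + 1)) (j : ℕ) : ℕ :=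
  Nat.findGreatest (fun k => fext f k ≤ j) m

lemma dnat_le {m n : ℕ} (f : Fin (m + 1) →o Fin (n + 1)) (j : ℕ) : dnat f j ≤ m :=
  Nat.findGreatest_le m

lemma fext_zero {m n : ℕ} (f : Fin (m + 1) →o Fin (n + 1)) (hf0 : f 0 = 0) :
    fext f 0 = 0 := by
  have : (⟨min 0 m, by omega⟩ : Fin (m + 1)) = 0 := by
    apply Fin.ext; simp
  simp [fext, this, hf0]

lemma dnat_spec {m n : ℕ} (f : Fin (m + 1) →o Fin (n + 1)) (hf0 : f 0 = 0) (j : ℕ) :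
    fext f (dnat f j) ≤ j :=
  Nat.findGreatest_spec (P := fun k => fext f k ≤ j) (Nat.zero_le m)
    (by show fext f 0 ≤ j; rw [fext_zero f hf0]; omega)

lemma galois_aux {m n : ℕ} (f : Fin (m + 1) →o Fin (n + 1)) (hf0 : f 0 = 0)
    {k : ℕ} (hk : k ≤ m) (j : ℕ) :
    fext f k ≤ j ↔ k ≤ dnat f j := by
  constructor
  · intro h
    exact Nat.le_findGreatest hk h
  · intro h
    exact le_trans (fext_mono f h) (dnat_spec f hf0 j)

lemma dnat_lt {m n : ℕ} (f : Fin (m + 1) →o Fin (n + 1)) (hf0 : f 0 = 0)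
    (hfl : f (Fin.last m) = Fin.last n) {j : ℕ} (hj : j < n) : dnat f j < m := by
  rcases Nat.lt_or_ge (dnat f j) m with h | h
  · exact h
  · exfalso
    have hdm : dnat f j = m := le_antisymm (dnat_le f j) h
    have := dnat_spec f hf0 j
    rw [hdm, fext_eq f (le_refl m)] at this
    have hl : (⟨m, by omega⟩ : Fin (m + 1)) = Fin.last m := rfl
    rw [hl, hfl] at this
    simp [Fin.last] at this
    omega

/-- The dual of an active morphism, as a monotone map. -/
def dual {x y : ActiveObj} (f : x ⟶ y) : Fin y.n →o Fin x.n where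
  toFun j := ⟨dnat f.1 j, dnat_lt f.1 f.2.1 f.2.2 j.isLt⟩
  monotone' := by
    intro a b hab
    simp only [Fin.mk_le_mk]
    exact Nat.findGreatest_mono (fun k hk => le_trans hk hab) le_rfl

lemma dual_galois {x y : ActiveObj} (f : x ⟶ y) (i : Fin (x.n + 1)) (j : Fin y.n) :
    (f.1 i : ℕ) ≤ (j : ℕ) ↔ (i : ℕ) ≤ (dual f j : ℕ) := by
  have h := galois_aux f.1 f.2.1 (k := (i : ℕ)) (by omega) (j : ℕ)
  rw [fext_eq f.1 (by omega)] at h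
  exact h

/-- Determination: a monotone map satisfying the Galois property equals the dual. -/
lemma dual_det {x y : ActiveObj} (f : x ⟶ y) (g : Fin y.n →o Fin x.n)
    (H : ∀ (i : Fin (x.n + 1)) (j : Fin y.n), ((f.1 i : ℕ) ≤ (j : ℕ) ↔ (i : ℕ) ≤ (g j : ℕ))) :
    dual f = g := by
  apply OrderHom.ext
  funext j
  apply Fin.ext
  have hd := (dual f j).isLt
  have hg := (g j).isLt
  have h1 : ((dual f j : ℕ)) ≤ (g j : ℕ) := by
    have hf : (f.1 ⟨(dual f j : ℕ), by omega⟩ : ℕ) ≤ (j : ℕ) :=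
      (dual_galois f ⟨(dual f j : ℕ), by omega⟩ j).mpr (by simp)
    simpa using (H ⟨(dual f j : ℕ), by omega⟩ j).mp hf
  have h2 : ((g j : ℕ)) ≤ (dual f j : ℕ) := by
    have hf : (f.1 ⟨(g j : ℕ), by omega⟩ : ℕ) ≤ (j : ℕ) :=
      (H ⟨(g j : ℕ), by omega⟩ j).mpr (by simp)
    simpa using (dual_galois f ⟨(g j : ℕ), by omega⟩ j).mp hf
  omega

lemma fin_det {N : ℕ} (a b : Fin (N + 1))
    (H : ∀ j : Fin N, ((a : ℕ) ≤ (j : ℕ) ↔ (b : ℕ) ≤ (j : ℕ))) : a = b := by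
  apply Fin.ext
  have ha := a.isLt
  have hb := b.isLt
  rcases Nat.lt_trichotomy (a : ℕ) (b : ℕ) with h | h | h
  · have := (H ⟨(a : ℕ), by omega⟩).mp (by simp)
    simp at this; omega
  · exact h
  · have := (H ⟨(b : ℕ), by omega⟩).mpr (by simp)
    simp at this; omega

/-- The functor from the opposite of the active category to the augmented simplex
category. -/
def F : ActiveObjᵒᵖ ⥤ AugObj where
  obj X := AugObj.mk X.unop.n
  map {X Y} f := dual f.unop
  map_id X := dual_det _ OrderHom.id (fun i j => Iff.rfl)
  map_comp {X Y Z} f g := dual_det _ _ (fun i j =>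
    (dual_galois f.unop (g.unop.1 i) j).trans (dual_galois g.unop i (dual f.unop j)))

/-- The inverse construction: from a monotone map of finite linear orders to an
active monotone map, by counting. -/
def eOrd {m n : ℕ} (h : Fin n →o Fin m) : Fin (m + 1) →o Fin (n + 1) where
  toFun i := ⟨(Finset.univ.filter fun j : Fin n => (h j : ℕ) < (i : ℕ)).card, by
    have hc : (Finset.univ.filter fun j : Fin n => (h j : ℕ) < (i : ℕ)).card ≤
        (Finset.univ : Finset (Fin n)).card := Finset.card_filter_le _ _
    simp only [Finset.card_univ, Fintype.card_fin] at hc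
    omega⟩
  monotone' := by
    intro a b hab
    simp only [Fin.mk_le_mk]
    apply Finset.card_le_card
    intro j hj
    simp only [Finset.mem_filter, Finset.mem_univ, true_and] at hj ⊢
    have hab' : (a : ℕ) ≤ (b : ℕ) := hab
    omega

lemma eOrd_galois {m n : ℕ} (h : Fin n →o Fin m) (i : Fin (m + 1)) (j : Fin n) :
    ((eOrd h i : ℕ)) ≤ (j : ℕ) ↔ (i : ℕ) ≤ (h j : ℕ) := by
  constructor
  · intro hc
    by_contra hcon
    push_neg at hcon
    have hsub : Finset.Iic j ⊆ Finset.univ.filter fun j' : Fin n => (h j' : ℕ) < (i : ℕ) := by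
      intro j' hj'
      simp only [Finset.mem_Iic] at hj'
      simp only [Finset.mem_filter, Finset.mem_univ, true_and]
      exact lt_of_le_of_lt (h.monotone hj') hcon
    have hcard := Finset.card_le_card hsub
    rw [Fin.card_Iic] at hcard
    have : (eOrd h i : ℕ) =
        (Finset.univ.filter fun j' : Fin n => (h j' : ℕ) < (i : ℕ)).card := rfl
    omega
  · intro hle
    have hsub : (Finset.univ.filter fun j' : Fin n => (h j' : ℕ) < (i : ℕ)) ⊆ Finset.Iio j := by
      intro j' hj'
      simp only [Finset.mem_filter, Finset.mem_univ, true_and] at hj'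
      simp only [Finset.mem_Iio]
      by_contra hcon
      push_neg at hcon
      have := h.monotone hcon
      have hjj : (h j : ℕ) ≤ (h j' : ℕ) := this
      omega
    have hcard := Finset.card_le_card hsub
    rw [Fin.card_Iio] at hcard
    exact hcard

/-- The inverse construction as an active morphism. -/
def eact {x y : ActiveObj} (h : Fin x.n →o Fin y.n) : y ⟶ x :=
  ⟨eOrd h, by
    constructor
    · apply Fin.ext
      show (Finset.univ.filter fun j : Fin x.n => (h j : ℕ) < ((0 : Fin (y.n + 1)) : ℕ)).card
          = ((0 : Fin (x.n + 1)) : ℕ)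
      simp
    · apply Fin.ext
      show (Finset.univ.filter fun j : Fin x.n =>
          (h j : ℕ) < ((Fin.last y.n : Fin (y.n + 1)) : ℕ)).card
          = ((Fin.last x.n : Fin (x.n + 1)) : ℕ)
      have : (Finset.univ.filter fun j : Fin x.n => (h j : ℕ) < y.n) = Finset.univ := by
        apply Finset.filter_true_of_mem
        intro j _
        exact (h j).isLt
      simp only [Fin.val_last, this, Finset.card_univ, Fintype.card_fin]⟩

instance F_full : F.Full where
  map_surjective {X Y} t := by
    refine ⟨(eact t).op, ?_⟩
    exact dual_det _ _ (fun i j => eOrd_galois t i j)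

instance F_faithful : F.Faithful where
  map_injective {X Y} f g hfg := by
    apply Quiver.Hom.unop_inj
    apply Subtype.ext
    apply OrderHom.ext
    funext i
    apply fin_det
    intro j
    calc (f.unop.1 i : ℕ) ≤ (j : ℕ) ↔ (i : ℕ) ≤ (dual f.unop j : ℕ) := dual_galois f.unop i j
      _ ↔ (i : ℕ) ≤ (dual g.unop j : ℕ) := by rw [show dual f.unop = dual g.unop from hfg]
      _ ↔ (g.unop.1 i : ℕ) ≤ (j : ℕ) := (dual_galois g.unop i j).symm

instance F_essSurj : F.EssSurj where
  mem_essImage Y := ⟨Opposite.op (ActiveObj.mk Y.n), ⟨eqToIso (by cases Y; rfl)⟩⟩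

instance F_isEquiv : F.IsEquivalence := {}

lemma coe_δa (n : ℕ) (i : Fin (n + 1)) (j : Fin n) :
    ((show Fin n →o Fin (n + 1) from δa n i) j : ℕ) = if (j : ℕ) < (i : ℕ) then (j : ℕ) else (j : ℕ) + 1 := by
  show ((Fin.succAbove i j : Fin (n + 1)) : ℕ) = _
  rcases lt_or_ge ((j : ℕ)) ((i : ℕ)) with hlt | hle
  · rw [Fin.succAbove_of_castSucc_lt i j (by rwa [Fin.lt_def, Fin.coe_castSucc])]
    simp [hlt]
  · rw [Fin.succAbove_of_le_castSucc i j (by rwa [Fin.le_def, Fin.coe_castSucc])]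
    simp [Nat.not_lt.mpr hle]

end ActiveAug

/-- The opposite of the wide subcategory of active morphisms of the simplex category
is equivalent to the augmented simplex category `Δ_a`, via an equivalence sending
`[n]` to the linear order with `n` elements, each interior coface `δⁿ_i` (`0 < i < n`)
to the codegeneracy `σ^{n-2}_{i-1}`, and each codegeneracy `σⁿ_i` to the coface
`δⁿ_i`. -/
theorem activeOp_equiv_augmented :
    ∃ (e : ActiveObjᵒᵖ ≌ AugObj)
      (h : ∀ n : ℕ, e.functor.obj (Opposite.op (ActiveObj.mk n)) = AugObj.mk n),
      (∀ (n : ℕ) (i : Fin (n + 1)),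
        e.functor.map (σact n i).op =
          eqToHom (h n) ≫ δa n i ≫ eqToHom (h (n + 1)).symm) ∧
      (∀ (m : ℕ) (i : ℕ) (h1 : 1 ≤ i) (h2 : i ≤ m),
        e.functor.map (δact m i h1 h2).op =
          eqToHom (h (m + 1)) ≫ σa m (i - 1) (by omega) ≫ eqToHom (h m).symm) := by
  refine ⟨ActiveAug.F.asEquivalence, fun n => rfl, ?_, ?_⟩
  · intro n i
    show ActiveAug.dual (σact n i) = δa n i
    apply ActiveAug.dual_det
    intro k j
    have hk := k.isLt
    have hj := j.isLt
    have hi := i.isLt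
    show (if (k : ℕ) ≤ (i : ℕ) then (k : ℕ) else (k : ℕ) - 1) ≤ (j : ℕ) ↔
      (k : ℕ) ≤ ((show Fin n →o Fin (n + 1) from δa n i) j : ℕ)
    rw [ActiveAug.coe_δa]
    split_ifs <;> omega
  · intro m i h1 h2
    show ActiveAug.dual (δact m i h1 h2) = σa m (i - 1) (by omega)
    apply ActiveAug.dual_det
    intro k j
    have hk := k.isLt
    have hj := j.isLt
    show (if (k : ℕ) < i then (k : ℕ) else (k : ℕ) + 1) ≤ (j : ℕ) ↔
      (k : ℕ) ≤ (if (j : ℕ) ≤ i - 1 then (j : ℕ) else (j : ℕ) - 1)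
    split_ifs <;> omega
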